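/- Let $k$ be an algebraically closed field of characteristic $p \geq 3$. The number of pairs $(c,d) \in k^2$ satisfying $c^{p^2-1} = 2$, $d^{p^2-1} = 2$, and $(cd^p - c^p d)^{p-1} = -2$ is exactly $(p^2-1)\cdot p \cdot (p-1)$. -/

import Mathlib

open Polynomial

lemma card_pow_eq_aux (k : Type*) [Field k] [IsAlgClosed k] (n : ℕ) (hn : (n : k) ≠ 0)
    (a : k) (ha : a ≠ 0) : Set.ncard {x : k | x ^ n = a} = n := by
  classical
  have hn0 : n ≠ 0 := by rintro rfl; simp at hn
  set f : k[X] := X ^ n - C a with hf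
  have hfne : f ≠ 0 := X_pow_sub_C_ne_zero (Nat.pos_of_ne_zero hn0) a
  have hdeg : f.natDegree = n := natDegree_X_pow_sub_C
  have hsep : f.Separable := separable_X_pow_sub_C a hn ha
  have hsplit : f.Splits := IsAlgClosed.splits f
  have hcard : f.roots.card = n := by
    rw [splits_iff_card_roots.mp hsplit, hdeg]
  have hnodup : f.roots.Nodup := Polynomial.nodup_roots hsep
  have hset : {x : k | x ^ n = a} = (f.roots.toFinset : Set k) := by
    ext x
    simp only [Set.mem_setOf_eq, Finset.coe_sort_coe, Multiset.mem_toFinset, mem_roots hfne,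
      Finset.mem_coe, hf, IsRoot.def, eval_sub, eval_pow, eval_X, eval_C, sub_eq_zero]
    rw [← hf, mem_roots hfne, IsRoot.def, hf, eval_sub, eval_pow, eval_X, eval_C, sub_eq_zero]
  rw [hset, Set.ncard_coe_finset, Multiset.toFinset_card_of_nodup hnodup, hcard]

/-- Over an algebraically closed field of characteristic `p ≥ 3`, the number of pairs `(c,d)`
with `c^{p²-1} = 2`, `d^{p²-1} = 2` and `(cdᵖ - cᵖd)^{p-1} = -2` is `(p²-1)·p·(p-1)`. -/
theorem stmt14 (k : Type*) [Field k] [IsAlgClosed k] (p : ℕ) (hp : p.Prime) (h3 : 3 ≤ p)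
    [CharP k p] :
    Set.ncard {cd : k × k | cd.1 ^ (p ^ 2 - 1) = 2 ∧ cd.2 ^ (p ^ 2 - 1) = 2 ∧
      (cd.1 * cd.2 ^ p - cd.1 ^ p * cd.2) ^ (p - 1) = -2} = (p ^ 2 - 1) * p * (p - 1) := by
  classical
  haveI := Fact.mk hp
  have hp1 : 1 ≤ p := by omega
  have hp2 : 1 ≤ p ^ 2 := Nat.one_le_pow _ _ (by omega)
  have hple : p - 1 ≤ p ^ 2 - 1 := by
    have : p ≤ p ^ 2 := Nat.le_self_pow (by norm_num) p
    omega
  have hmul : (p + 1) * (p - 1) = p ^ 2 - 1 := by zify [hp1, hp2]; ring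
  set n := p ^ 2 - 1 with hndef
  have hn0 : n ≠ 0 := by have : 2 ≤ p ^ 2 := by nlinarith
                         simp only [hndef]; omega
  have hpm0 : p - 1 ≠ 0 := by omega
  -- cast facts
  have h2k : (2 : k) ≠ 0 := by
    have hnd : ¬ (p ∣ 2) := fun h => by have := Nat.le_of_dvd (by norm_num) h; omega
    have := (not_iff_not.mpr (CharP.cast_eq_zero_iff k p 2)).mpr hnd
    simpa using this
  have hnk : ((n : ℕ) : k) ≠ 0 := by
    have : ((n : ℕ) : k) = -1 := by
      rw [hndef, Nat.cast_sub hp2, Nat.cast_pow, CharP.cast_eq_zero k p]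
      norm_num
    rw [this]
    exact neg_ne_zero.mpr one_ne_zero
  have hmk : (((p - 1 : ℕ)) : k) ≠ 0 := by
    have : (((p - 1 : ℕ)) : k) = -1 := by
      rw [Nat.cast_sub hp1, CharP.cast_eq_zero k p]
      norm_num
    rw [this]
    exact neg_ne_zero.mpr one_ne_zero
  -- the two auxiliary sets
  set S1 : Set k := {c | c ^ n = 2} with hS1
  set S2 : Set k := {z | z ^ n = 1 ∧ z ^ (p - 1) ≠ 1} with hS2
  -- expansion identity
  have hexp : ∀ c z : k, c * (z * c) ^ p - c ^ p * (z * c)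
      = c ^ (p + 1) * (z ^ p - z) := by
    intro c z
    rw [mul_pow]
    ring
  have hcn : ∀ c : k, (c ^ (p + 1)) ^ (p - 1) = c ^ n := by
    intro c; rw [← pow_mul, hmul]
  -- key algebraic fact
  have key : ∀ z : k, z ^ n = 1 → z ^ (p - 1) ≠ 1 → (z ^ p - z) ^ (p - 1) = -1 := by
    intro z hz1 hz2
    set u := z ^ (p - 1) with hu
    have hu1 : u ^ (p + 1) = 1 := by
      rw [hu, ← pow_mul, mul_comm (p - 1) (p + 1), hmul, hz1]
    have hune : u - 1 ≠ 0 := sub_ne_zero.mpr hz2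
    have hfrob : (u - 1) ^ p = u ^ p - 1 := by
      have := sub_pow_char (x := u) (y := (1 : k)) (p := p)
      simpa using this
    have hps : (u - 1) ^ (p - 1) * (u - 1) = (u - 1) ^ p := by
      rw [← pow_succ]; congr 1; omega
    have hcalc : (u * (u - 1) ^ (p - 1)) * (u - 1) = (-1) * (u - 1) := by
      calc u * (u - 1) ^ (p - 1) * (u - 1) = u * ((u - 1) ^ (p - 1) * (u - 1)) := by ring
        _ = u * (u ^ p - 1) := by rw [hps, hfrob]
        _ = u * u ^ p - u := by ring
        _ = u ^ (p + 1) - u := by rw [← pow_succ']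
        _ = 1 - u := by rw [hu1]
        _ = (-1) * (u - 1) := by ring
    have humain : u * (u - 1) ^ (p - 1) = -1 := mul_right_cancel₀ hune hcalc
    have hzu : z ^ p - z = z * (u - 1) := by
      rw [hu, mul_sub, mul_one, ← pow_succ']
      congr 2
      omega
    rw [hzu, mul_pow, ← hu, humain]
  -- the map
  set g : k × k → k × k := fun q => (q.1, q.2 * q.1) with hg
  have himg : {cd : k × k | cd.1 ^ (p ^ 2 - 1) = 2 ∧ cd.2 ^ (p ^ 2 - 1) = 2 ∧
      (cd.1 * cd.2 ^ p - cd.1 ^ p * cd.2) ^ (p - 1) = -2} = g '' (S1 ×ˢ S2) := by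
    ext ⟨c, d⟩
    simp only [Set.mem_setOf_eq, Set.mem_image, Set.mem_prod, Prod.exists, hg, Prod.mk.injEq,
      hS1, hS2, ← hndef]
    constructor
    · rintro ⟨h1, h2, h3⟩
      have hc0 : c ≠ 0 := by rintro rfl; rw [zero_pow hn0] at h1; exact h2k h1.symm
      refine ⟨c, d * c⁻¹, ⟨h1, ?_, ?_⟩, rfl, by field_simp⟩
      · rw [mul_pow, inv_pow, h2, h1]
        field_simp
      · intro hcon
        have hd : d = (d * c⁻¹) * c := by field_simp
        rw [hd, hexp c (d * c⁻¹)] at h3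
        have : (d * c⁻¹) ^ p - d * c⁻¹ = 0 := by
          have : (d * c⁻¹) ^ p = (d * c⁻¹) ^ (p - 1) * (d * c⁻¹) := by
            rw [← pow_succ]; congr 1; omega
          rw [this, hcon, one_mul, sub_self]
        rw [this, mul_zero, zero_pow hpm0] at h3
        have : (-2 : k) ≠ 0 := neg_ne_zero.mpr h2k
        exact this h3.symm
    · rintro ⟨c', z, ⟨hc', hz1, hz2⟩, rfl, rfl⟩
      refine ⟨hc', ?_, ?_⟩
      · rw [mul_pow, hz1, one_mul, hc']
      · rw [hexp, mul_pow, hcn, hc', key z hz1 hz2]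
        norm_num
  rw [himg]
  have hinj : Set.InjOn g (S1 ×ˢ S2) := by
    rintro ⟨c, z⟩ ⟨hc, -⟩ ⟨c', z'⟩ ⟨hc', -⟩ heq
    simp only [hg, Prod.mk.injEq] at heq
    obtain ⟨rfl, heq2⟩ := heq
    have hc0 : c ≠ 0 := by
      rintro rfl; rw [Set.mem_setOf_eq, zero_pow hn0] at hc; exact h2k hc.symm
    exact Prod.ext rfl (mul_right_cancel₀ hc0 heq2)
  rw [Set.ncard_image_of_injOn hinj]
  have hprod : (S1 ×ˢ S2).ncard = S1.ncard * S2.ncard := by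
    rw [← Nat.card_coe_set_eq, ← Nat.card_coe_set_eq, ← Nat.card_coe_set_eq,
      Nat.card_congr (Equiv.Set.prod S1 S2), Nat.card_prod]
  -- cardinality of S1
  have hcard1 : S1.ncard = n := card_pow_eq_aux k n hnk 2 h2k
  -- cardinality of S2
  have hA : Set.ncard {z : k | z ^ n = 1} = n := card_pow_eq_aux k n hnk 1 one_ne_zero
  have hB : Set.ncard {z : k | z ^ (p - 1) = 1} = p - 1 :=
    card_pow_eq_aux k (p - 1) hmk 1 one_ne_zero
  have hBsub : {z : k | z ^ (p - 1) = 1} ⊆ {z : k | z ^ n = 1} := by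
    intro z hz
    simp only [Set.mem_setOf_eq] at hz ⊢
    rw [← hmul, mul_comm, pow_mul, hz, one_pow]
  have hBfin : {z : k | z ^ (p - 1) = 1}.Finite :=
    Set.finite_of_ncard_ne_zero (by rw [hB]; omega)
  have hS2eq : S2 = {z : k | z ^ n = 1} \ {z : k | z ^ (p - 1) = 1} := by
    ext z
    simp [hS2, Set.mem_diff]
  have hcard2 : S2.ncard = n - (p - 1) := by
    rw [hS2eq, Set.ncard_diff hBsub hBfin, hA, hB]
  rw [hprod, hcard1, hcard2, hndef]
  have hfin : p ^ 2 - 1 - (p - 1) = p * (p - 1) := by zify [hp1, hp2, (show p - 1 ≤ p ^ 2 - 1 from hple)]; ring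
  rw [hfin]
  ring
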